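/- Let ψ ∈ 𝒩ᵐ(ℝⁿ) with associated radius functions m(r) = inf{|η| : √|ψ(η)| = r} and M(r) = sup{|η| : √|ψ(η)| = r}. Then for all 0 < r < R < liminf_{|ξ|→∞} √|ψ(ξ)| the Lebesgue volumes of metric balls satisfy λ(B^{d_ψ}(0,R)) ≤ (M(R)/m(r))ⁿ · λ(B^{d_ψ}(0,r)). -/

import Mathlib

open MeasureTheory ENNReal

def IsNegativeDefinite {E : Type*} [AddGroup E] (ψ : E → ℂ) : Prop :=
  0 ≤ (ψ 0).re ∧ (ψ 0).im = 0 ∧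
  ∀ (m : ℕ) (ξ : Fin m → E) (c : Fin m → ℂ),
    0 ≤ (∑ j, ∑ k,
        (ψ (ξ j) + (starRingEnd ℂ) (ψ (ξ k)) - ψ (ξ j - ξ k)) * c j * (starRingEnd ℂ) (c k)).re ∧
    (∑ j, ∑ k,
        (ψ (ξ j) + (starRingEnd ℂ) (ψ (ξ k)) - ψ (ξ j - ξ k)) * c j * (starRingEnd ℂ) (c k)).im = 0

/-- Volume comparison for metric balls of `d_ψ`:
`λ(B^{d_ψ}(0,R)) ≤ (M(R)/m(r))ⁿ λ(B^{d_ψ}(0,r))` for `0 < r < R < liminf √|ψ|`. -/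
theorem statement8 {n : ℕ} (ψ : EuclideanSpace ℝ (Fin n) → ℂ)
    (hcont : Continuous ψ) (hneg : IsNegativeDefinite ψ) (h0 : ψ 0 = 0)
    (hnonper : ∀ ξ : EuclideanSpace ℝ (Fin n), ψ ξ = 0 → ξ = 0)
    (hmetr : (0 : EReal) < Filter.liminf
        (fun ξ : EuclideanSpace ℝ (Fin n) => ((‖ψ ξ‖ : ℝ) : EReal))
        (Bornology.cobounded (EuclideanSpace ℝ (Fin n))))
    (m M : ℝ → ℝ)
    (hm : ∀ r, m r = sInf {x : ℝ | ∃ η : EuclideanSpace ℝ (Fin n),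
        Real.sqrt (‖ψ η‖) = r ∧ ‖η‖ = x})
    (hM : ∀ r, M r = sSup {x : ℝ | ∃ η : EuclideanSpace ℝ (Fin n),
        Real.sqrt (‖ψ η‖) = r ∧ ‖η‖ = x})
    (r R : ℝ) (hr : 0 < r) (hrR : r < R)
    (hR : (R : EReal) < Filter.liminf
        (fun ξ : EuclideanSpace ℝ (Fin n) => ((Real.sqrt (‖ψ ξ‖) : ℝ) : EReal))
        (Bornology.cobounded (EuclideanSpace ℝ (Fin n)))) :
    volume {ξ : EuclideanSpace ℝ (Fin n) | Real.sqrt (‖ψ ξ‖) < R} ≤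
      ENNReal.ofReal ((M R / m r) ^ n) *
        volume {ξ : EuclideanSpace ℝ (Fin n) | Real.sqrt (‖ψ ξ‖) < r} := by
  classical
  set f : EuclideanSpace ℝ (Fin n) → ℝ := fun ξ => Real.sqrt (‖ψ ξ‖) with hfdef
  have hf : Continuous f := Real.continuous_sqrt.comp (continuous_norm.comp hcont)
  have hf0 : f 0 = 0 := by simp [hfdef, h0]
  have hR0 : 0 < R := hr.trans hrR
  rcases Nat.eq_zero_or_pos n with hn | hn
  · -- trivial 0-dimensional case
    subst hn
    have hsub : Subsingleton (EuclideanSpace ℝ (Fin 0)) := by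
      constructor; intro a b; ext i; exact absurd i.2 (by simp)
    have hset : ∀ c : ℝ, 0 < c →
        {ξ : EuclideanSpace ℝ (Fin 0) | Real.sqrt (‖ψ ξ‖) < c} = Set.univ := by
      intro c hc
      ext ξ
      have : ξ = 0 := Subsingleton.elim ξ 0
      simp [this, h0, hc]
    rw [hset R hR0, hset r hr]
    simp
  haveI : Nonempty (Fin n) := ⟨⟨0, hn⟩⟩
  haveI : Nontrivial (EuclideanSpace ℝ (Fin n)) := by
    refine ⟨0, EuclideanSpace.single ⟨0, hn⟩ 1, fun h => ?_⟩
    have := congrArg (fun v => v ⟨0, hn⟩) h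
    rw [EuclideanSpace.single_apply] at this
    simp [PiLp.zero_apply] at this
  -- eventually f is bigger than R
  obtain ⟨K, -, hK⟩ : ∃ K : ℝ, True ∧ ∀ ξ : EuclideanSpace ℝ (Fin n), K ≤ ‖ξ‖ → R < f ξ := by
    have hev : ∀ᶠ ξ in Bornology.cobounded (EuclideanSpace ℝ (Fin n)), (R : EReal) < ((f ξ : ℝ) : EReal) :=
      Filter.eventually_lt_of_lt_liminf hR
    obtain ⟨K, -, hK⟩ := (Filter.hasBasis_cobounded_norm (E := EuclideanSpace ℝ (Fin n))).eventually_iff.1 hev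
    exact ⟨K, trivial, fun ξ hξ => by exact_mod_cast hK hξ⟩
  -- IVT inward: reach any value level c ≤ f ξ by a point of smaller norm
  have key : ∀ (ξ : EuclideanSpace ℝ (Fin n)) (c : ℝ), 0 ≤ c → c ≤ f ξ → ∃ η : EuclideanSpace ℝ (Fin n), f η = c ∧ ‖η‖ ≤ ‖ξ‖ := by
    intro ξ c hc hcξ
    have hg : ContinuousOn (fun t : ℝ => f (t • ξ)) (Set.Icc 0 1) :=
      (hf.comp (continuous_id.smul continuous_const)).continuousOn
    have h01 : (0 : ℝ) ≤ 1 := zero_le_one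
    have : c ∈ Set.Icc (f ((0 : ℝ) • ξ)) (f ((1 : ℝ) • ξ)) := by
      rw [zero_smul, one_smul, hf0]; exact ⟨hc, hcξ⟩
    obtain ⟨t, ht, htc⟩ := intermediate_value_Icc h01 hg this
    refine ⟨t • ξ, htc, ?_⟩
    rw [norm_smul, Real.norm_eq_abs, abs_of_nonneg ht.1]
    calc t * ‖ξ‖ ≤ 1 * ‖ξ‖ := by gcongr; exact ht.2
      _ = ‖ξ‖ := one_mul _
  -- IVT outward: from a point with f ξ < R reach the level R with larger norm
  have key2 : ∀ ξ : EuclideanSpace ℝ (Fin n), f ξ < R → ∃ η : EuclideanSpace ℝ (Fin n), f η = R ∧ ‖ξ‖ ≤ ‖η‖ := by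
    intro ξ hξ
    rcases eq_or_ne ξ 0 with rfl | hξ0
    · obtain ⟨x, hx⟩ := exists_norm_eq (EuclideanSpace ℝ (Fin n)) (le_max_right K 0)
      have hfx : R < f x := hK x (hx.symm ▸ le_max_left K 0)
      obtain ⟨η, hη, -⟩ := key x R hR0.le hfx.le
      exact ⟨η, hη, by simp⟩
    · have hξpos : 0 < ‖ξ‖ := norm_pos_iff.2 hξ0
      set T : ℝ := max (K / ‖ξ‖) 1 with hT
      have hT1 : (1 : ℝ) ≤ T := le_max_right _ _
      have hg : ContinuousOn (fun t : ℝ => f (t • ξ)) (Set.Icc 1 T) :=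
        (hf.comp (continuous_id.smul continuous_const)).continuousOn
      have hTK : R < f (T • ξ) := by
        apply hK
        rw [norm_smul, Real.norm_eq_abs, abs_of_nonneg (zero_le_one.trans hT1)]
        calc K = K / ‖ξ‖ * ‖ξ‖ := (div_mul_cancel₀ K hξpos.ne').symm
          _ ≤ T * ‖ξ‖ := by gcongr; exact le_max_left _ _
      have hmem : R ∈ Set.Icc (f ((1 : ℝ) • ξ)) (f (T • ξ)) := by
        rw [one_smul]; exact ⟨hξ.le, hTK.le⟩
      obtain ⟨t, ht, htc⟩ := intermediate_value_Icc hT1 hg hmem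
      refine ⟨t • ξ, htc, ?_⟩
      rw [norm_smul, Real.norm_eq_abs, abs_of_nonneg (zero_le_one.trans ht.1)]
      calc ‖ξ‖ = 1 * ‖ξ‖ := (one_mul _).symm
        _ ≤ t * ‖ξ‖ := by gcongr; exact ht.1
  -- level sets
  set Sr : Set ℝ := {x : ℝ | ∃ η : EuclideanSpace ℝ (Fin n), Real.sqrt (‖ψ η‖) = r ∧ ‖η‖ = x} with hSr
  set SR : Set ℝ := {x : ℝ | ∃ η : EuclideanSpace ℝ (Fin n), Real.sqrt (‖ψ η‖) = R ∧ ‖η‖ = x} with hSR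
  obtain ⟨ηR, hηR, -⟩ : ∃ η : EuclideanSpace ℝ (Fin n), f η = R ∧ ‖(0 : EuclideanSpace ℝ (Fin n))‖ ≤ ‖η‖ := key2 0 (by rw [hf0]; exact hR0)
  obtain ⟨ηr, hηr, -⟩ : ∃ η : EuclideanSpace ℝ (Fin n), f η = r ∧ ‖η‖ ≤ ‖ηR‖ :=
    key ηR r hr.le (by rw [hηR]; exact hrR.le)
  have hSrne : Sr.Nonempty := ⟨‖ηr‖, ηr, hηr, rfl⟩
  have hSRne : SR.Nonempty := ⟨‖ηR‖, ηR, hηR, rfl⟩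
  have hSrbdd : BddBelow Sr := ⟨0, by rintro x ⟨η, -, rfl⟩; exact norm_nonneg η⟩
  have hSRbdd : BddAbove SR := by
    refine ⟨K, ?_⟩
    rintro x ⟨η, hη, rfl⟩
    by_contra hx
    exact absurd hη (by have := hK η (not_le.1 hx).le; rw [hfdef] at this; linarith)
  -- m r is positive
  have hmrpos : 0 < m r := by
    have hlt : ∀ᶠ η in nhds (0 : EuclideanSpace ℝ (Fin n)), f η < r := by
      have ht : Filter.Tendsto f (nhds 0) (nhds 0) := by
        have := hf.tendsto 0; rwa [hf0] at this
      exact ht.eventually_lt_const hr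
    obtain ⟨ε, hε, hball⟩ := Metric.eventually_nhds_iff_ball.1 hlt
    rw [hm r]
    refine lt_of_lt_of_le hε (le_csInf hSrne ?_)
    rintro x ⟨η, hη, rfl⟩
    by_contra hx
    have : η ∈ Metric.ball (0 : EuclideanSpace ℝ (Fin n)) ε := by
      rw [Metric.mem_ball, dist_zero_right]; linarith [not_le.1 hx]
    exact absurd hη (ne_of_lt (hball η this))
  -- inclusion: Euclidean ball of radius m r inside the small metric ball
  have hinc1 : Metric.ball (0 : EuclideanSpace ℝ (Fin n)) (m r) ⊆
      {ξ : EuclideanSpace ℝ (Fin n) | Real.sqrt (‖ψ ξ‖) < r} := by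
    intro ξ hξ
    rw [Metric.mem_ball, dist_zero_right] at hξ
    by_contra hfr
    rw [Set.mem_setOf_eq, not_lt] at hfr
    obtain ⟨η, hη, hηle⟩ := key ξ r hr.le hfr
    have : m r ≤ ‖η‖ := by rw [hm r]; exact csInf_le hSrbdd ⟨η, hη, rfl⟩
    linarith
  -- inclusion: big metric ball inside closed Euclidean ball of radius M R
  have hinc2 : {ξ : EuclideanSpace ℝ (Fin n) | Real.sqrt (‖ψ ξ‖) < R} ⊆
      Metric.closedBall (0 : EuclideanSpace ℝ (Fin n)) (M R) := by
    intro ξ hξ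
    obtain ⟨η, hη, hle⟩ := key2 ξ hξ
    have : ‖η‖ ≤ M R := by rw [hM R]; exact le_csSup hSRbdd ⟨η, hη, rfl⟩
    rw [Metric.mem_closedBall, dist_zero_right]
    linarith
  have hMRnn : 0 ≤ M R := by
    have : ‖ηR‖ ≤ M R := by rw [hM R]; exact le_csSup hSRbdd ⟨ηR, hηR, rfl⟩
    linarith [norm_nonneg ηR]
  -- volume computation
  have hfr : Module.finrank ℝ (EuclideanSpace ℝ (Fin n)) = n := finrank_euclideanSpace_fin
  calc volume {ξ : EuclideanSpace ℝ (Fin n) | Real.sqrt (‖ψ ξ‖) < R}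
      ≤ volume (Metric.closedBall (0 : EuclideanSpace ℝ (Fin n)) (M R)) := measure_mono hinc2
    _ = ENNReal.ofReal (M R ^ n) * volume (Metric.ball (0 : EuclideanSpace ℝ (Fin n)) 1) := by
        rw [MeasureTheory.Measure.addHaar_closedBall volume 0 hMRnn, hfr]
    _ = ENNReal.ofReal ((M R / m r) ^ n) * (ENNReal.ofReal (m r ^ n)
          * volume (Metric.ball (0 : EuclideanSpace ℝ (Fin n)) 1)) := by
        rw [← mul_assoc, ← ENNReal.ofReal_mul (by positivity), ← mul_pow,
          div_mul_cancel₀ _ hmrpos.ne']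
    _ = ENNReal.ofReal ((M R / m r) ^ n) * volume (Metric.ball (0 : EuclideanSpace ℝ (Fin n)) (m r)) := by
        rw [MeasureTheory.Measure.addHaar_ball volume 0 hmrpos.le, hfr]
    _ ≤ ENNReal.ofReal ((M R / m r) ^ n) *
          volume {ξ : EuclideanSpace ℝ (Fin n) | Real.sqrt (‖ψ ξ‖) < r} := by
        exact mul_le_mul_right (measure_mono hinc1) _
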